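/- Fix a dense sequence (s_n) with s_n ∈ {0,1}^n, meaning that for every finite binary string t there exists n with t a proper initial segment of s_n. For each n ≥ 0, define a graph G on {0,1}^{i₀} (for a fixed i₀) by joining u and v iff there exist n < i₀, ε ∈ {0,1}, and c ∈ {0,1}^{i₀-n-1} such that u = s_n ⌢ (ε) ⌢ c and v = s_n ⌢ (1-ε) ⌢ c. Then the graph G is acyclic. -/

import Mathlib

/-- For a dense sequence `s_n ∈ {0,1}^n`, the graph on `{0,1}^{i₀}` joining
`s_n ⌢ (ε) ⌢ c` to `s_n ⌢ (1-ε) ⌢ c` is acyclic. -/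
theorem stmt_2 (s : ℕ → List Bool) (hlen : ∀ n, (s n).length = n)
    (hdense : ∀ t : List Bool, ∃ n, (s n).take t.length = t ∧ t.length < n)
    (i₀ : ℕ) (G : SimpleGraph {u : List Bool // u.length = i₀})
    (hG : ∀ u v : {u : List Bool // u.length = i₀}, G.Adj u v ↔
      ∃ n < i₀, ∃ (ε : Bool) (c : List Bool), c.length = i₀ - n - 1 ∧
        u.1 = s n ++ [ε] ++ c ∧ v.1 = s n ++ [!ε] ++ c) :
    G.IsAcyclic := by
  classical
  intro v p hp
  -- choose coordinate data for every dart
  have hPd : ∀ d : G.Dart, ∃ n, n < i₀ ∧ ∃ ε c, c.length = i₀ - n - 1 ∧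
      d.fst.1 = s n ++ [ε] ++ c ∧ d.snd.1 = s n ++ [!ε] ++ c := by
    intro d
    obtain ⟨n, hn, h⟩ := (hG _ _).1 d.adj
    exact ⟨n, hn, h⟩
  choose nc hlt εc cc hclen hfst hsnd using hPd
  -- darts are nonempty
  have hpne : p.darts ≠ [] := by
    have h3 := hp.three_le_length
    intro h
    rw [← SimpleGraph.Walk.length_darts, h] at h3
    simp at h3
  obtain ⟨dm, hdm⟩ := List.exists_mem_of_ne_nil _ hpne
  obtain ⟨d₀, hd₀, hmax'⟩ := p.darts.toFinset.exists_max_image nc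
    ⟨dm, List.mem_toFinset.2 hdm⟩
  have hmax : ∀ d ∈ p.darts, nc d ≤ nc d₀ := fun d hd => hmax' d (List.mem_toFinset.2 hd)
  set N := nc d₀ with hNdef
  have hN : N < i₀ := hlt d₀
  -- dropping the first N+1 entries is invariant along every dart of p
  have hdropA : ∀ d : G.Dart, d.fst.1.drop (nc d + 1) = cc d := by
    intro d
    have hl : (s (nc d) ++ [εc d]).length = nc d + 1 := by simp [hlen]
    rw [hfst d, ← hl, List.drop_left]
  have hdropB : ∀ d : G.Dart, d.snd.1.drop (nc d + 1) = cc d := by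
    intro d
    have hl : (s (nc d) ++ [!εc d]).length = nc d + 1 := by simp [hlen]
    rw [hsnd d, ← hl, List.drop_left]
  have hdartdrop : ∀ d ∈ p.darts, d.fst.1.drop (N + 1) = d.snd.1.drop (N + 1) := by
    intro d hd
    have hle : nc d ≤ N := hmax d hd
    have e1 : d.fst.1.drop (N + 1) = (cc d).drop (N - nc d) := by
      rw [show N + 1 = (nc d + 1) + (N - nc d) by omega, ← List.drop_drop, hdropA d]
    have e2 : d.snd.1.drop (N + 1) = (cc d).drop (N - nc d) := by
      rw [show N + 1 = (nc d + 1) + (N - nc d) by omega, ← List.drop_drop, hdropB d]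
    rw [e1, e2]
  -- hence along all of p's support
  have hsupp : ∀ (a b : {u : List Bool // u.length = i₀}) (q : G.Walk a b),
      (∀ d ∈ q.darts, d.fst.1.drop (N + 1) = d.snd.1.drop (N + 1)) →
      ∀ x ∈ q.support, x.1.drop (N + 1) = a.1.drop (N + 1) := by
    intro a b q
    induction q with
    | nil =>
      intro _ x hx
      simp only [SimpleGraph.Walk.support_nil, List.mem_singleton] at hx
      rw [hx]
    | @cons u w b h q ih =>
      intro hq x hx
      rw [SimpleGraph.Walk.support_cons, List.mem_cons] at hx
      rcases hx with rfl | hx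
      · rfl
      · have hhead : (⟨(u, w), h⟩ : G.Dart).fst.1.drop (N + 1)
            = (⟨(u, w), h⟩ : G.Dart).snd.1.drop (N + 1) := by
          apply hq
          rw [SimpleGraph.Walk.darts_cons]
          exact List.mem_cons_self
        have htail : ∀ d ∈ q.darts, d.fst.1.drop (N + 1) = d.snd.1.drop (N + 1) := by
          intro d hd
          apply hq
          rw [SimpleGraph.Walk.darts_cons]
          exact List.mem_cons_of_mem _ hd
        exact (ih htail x hx).trans hhead.symm
  have hsuppP : ∀ x ∈ p.support, x.1.drop (N + 1) = v.1.drop (N + 1) :=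
    hsupp v v p hdartdrop
  -- the bit extraction function at position N
  have hbit : ∀ u : {u : List Bool // u.length = i₀}, N < u.1.length := by
    intro u; rw [u.2]; exact hN
  set f : {u : List Bool // u.length = i₀} → Bool := fun u => u.1[N]'(hbit u) with hfdef
  -- computing f on vertices of the special form
  have hgetN : ∀ (ε : Bool) (c : List Bool) (u : {u : List Bool // u.length = i₀}),
      u.1 = s N ++ [ε] ++ c → f u = ε := by
    intro ε c u hu
    have hu' : u.1 = s N ++ ([ε] ++ c) := by rw [hu, List.append_assoc]
    show u.1[N]'(hbit u) = ε
    rw [List.getElem_of_eq hu' (hbit u),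
      List.getElem_append_right (le_of_eq (hlen N))]
    simp [hlen]
  have hgetlt : ∀ d : G.Dart, nc d < N → f d.fst = f d.snd := by
    intro d hdlt
    have hc : N - (nc d + 1) < (cc d).length := by rw [hclen d]; omega
    have len1 : (s (nc d) ++ [εc d]).length = nc d + 1 := by simp [hlen]
    have len2 : (s (nc d) ++ [!εc d]).length = nc d + 1 := by simp [hlen]
    have e1 : f d.fst = (cc d)[N - (nc d + 1)]'hc := by
      show d.fst.1[N]'(hbit _) = _
      rw [List.getElem_of_eq (hfst d) (hbit _),
        List.getElem_append_right (by rw [len1]; omega)]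
      simp only [len1]
    have e2 : f d.snd = (cc d)[N - (nc d + 1)]'hc := by
      show d.snd.1[N]'(hbit _) = _
      rw [List.getElem_of_eq (hsnd d) (hbit _),
        List.getElem_append_right (by rw [len2]; omega)]
      simp only [len2]
    exact e1.trans e2.symm
  -- f flips exactly at darts of coordinate N
  have hflip : ∀ d ∈ p.darts, ((f d.fst != f d.snd) = true ↔ (decide (nc d = N)) = true) := by
    intro d hd
    have hle : nc d ≤ N := hmax d hd
    rcases eq_or_lt_of_le hle with heq | hlt'
    · rw [hgetN (εc d) (cc d) d.fst (heq ▸ hfst d),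
        hgetN (!εc d) (cc d) d.snd (heq ▸ hsnd d)]
      simp [heq]
    · rw [hgetlt d hlt']
      simp [Nat.ne_of_lt hlt']
  -- parity: f returns to its value, so the number of flips is even
  have parity : ∀ (a b : {u : List Bool // u.length = i₀}) (q : G.Walk a b),
      (f a = f b) ↔ Even (q.darts.countP (fun d => f d.fst != f d.snd)) := by
    intro a b q
    induction q with
    | nil => simp
    | @cons u w b h q ih =>
      rw [SimpleGraph.Walk.darts_cons, List.countP_cons]
      have hfst' : (⟨(u, w), h⟩ : G.Dart).fst = u := rfl
      have hsnd' : (⟨(u, w), h⟩ : G.Dart).snd = w := rfl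
      rw [hfst', hsnd']
      cases ha : f u <;> cases hw : f w <;> cases hb : f b <;>
        simp [ha, hw, hb, Nat.even_add_one] at ih ⊢ <;> exact ih
  have heven : Even (p.darts.countP (fun d => decide (nc d = N))) := by
    rw [← List.countP_congr hflip]
    exact (parity v v p).1 rfl
  -- all darts of coordinate N give the same edge
  have hinj : ∀ x ∈ p.darts, ∀ y ∈ p.darts, x.edge = y.edge → x = y :=
    List.inj_on_of_nodup_map hp.edges_nodup
  have hsameA : ∀ d ∈ p.darts, nc d = N →
      (d.fst.1 = s N ++ [εc d] ++ v.1.drop (N + 1) ∧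
       d.snd.1 = s N ++ [!εc d] ++ v.1.drop (N + 1)) := by
    intro d hd hdN
    have hcc : cc d = v.1.drop (N + 1) := by
      rw [← hdropA d, hdN]
      exact hsuppP d.fst (SimpleGraph.Walk.dart_fst_mem_support_of_mem_darts p hd)
    exact ⟨by rw [hfst d, hdN, hcc], by rw [hsnd d, hdN, hcc]⟩
  have hedge : ∀ d1 ∈ p.darts, ∀ d2 ∈ p.darts, nc d1 = N → nc d2 = N → d1 = d2 := by
    intro d1 hd1 d2 hd2 h1 h2
    apply hinj d1 hd1 d2 hd2
    obtain ⟨ha1, hb1⟩ := hsameA d1 hd1 h1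
    obtain ⟨ha2, hb2⟩ := hsameA d2 hd2 h2
    show s(d1.fst, d1.snd) = s(d2.fst, d2.snd)
    cases he1 : εc d1 <;> cases he2 : εc d2 <;>
      rw [he1] at ha1 hb1 <;> rw [he2] at ha2 hb2 <;>
      simp only [Bool.not_false, Bool.not_true] at ha1 hb1 ha2 hb2
    · rw [Subtype.ext (ha1.trans ha2.symm), Subtype.ext (hb1.trans hb2.symm)]
    · rw [Subtype.ext (ha1.trans hb2.symm), Subtype.ext (hb1.trans ha2.symm),
        Sym2.eq_swap]
    · rw [Subtype.ext (ha1.trans hb2.symm), Subtype.ext (hb1.trans ha2.symm),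
        Sym2.eq_swap]
    · rw [Subtype.ext (ha1.trans ha2.symm), Subtype.ext (hb1.trans hb2.symm)]
  -- hence at most one dart of coordinate N
  have hle1 : p.darts.countP (fun d => decide (nc d = N)) ≤ 1 := by
    by_contra hcon
    push_neg at hcon
    rw [List.countP_eq_length_filter] at hcon
    set l' := p.darts.filter (fun d => decide (nc d = N)) with hl'
    have h0 : 0 < l'.length := by omega
    have h1 : 1 < l'.length := hcon
    have hnd : l'.Nodup := List.Nodup.filter _ (List.Nodup.of_map _ hp.edges_nodup)
    have hne : l'[0]'h0 ≠ l'[1]'h1 := by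
      intro h
      exact absurd ((List.Nodup.getElem_inj_iff hnd).1 h) (by omega)
    apply hne
    have m0 := List.getElem_mem h0
    have m1 := List.getElem_mem h1
    exact hedge _ (List.mem_of_mem_filter m0) _ (List.mem_of_mem_filter m1)
      (by simpa using List.of_mem_filter m0) (by simpa using List.of_mem_filter m1)
  -- but at least one dart of coordinate N
  have hpos : 0 < p.darts.countP (fun d => decide (nc d = N)) :=
    List.countP_pos_iff.2 ⟨d₀, List.mem_toFinset.1 hd₀, by simp [hNdef]⟩
  obtain ⟨k, hk⟩ := heven
  omega
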